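/- Let G be a chordal s-t graph in which every vertex and edge lies on some s-t path. Let T be the set of all vertices x such that x is a common neighbor of the endpoints a, b of some edge e = (a,b) and there exists an s-t path in G - x using e. Then T is a tracking set for G. -/

import Mathlib

open SimpleGraph

noncomputable def trackSeq {V : Type} (T : Set V) (l : List V) : List V :=
  l.filter (fun v => @decide (v ∈ T) (Classical.propDecidable _))

/-- `T` is a tracking set for `s`-`t` paths in `G`: distinct `s`-`t` paths have
distinct sequences of `T`-vertices along them. -/
def IsTrackingSet {V : Type} (G : SimpleGraph V) (s t : V) (T : Set V) : Prop :=
  ∀ p q : G.Walk s t, p.IsPath → q.IsPath →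
    trackSeq T p.support = trackSeq T q.support → p = q

/-- Every vertex and every edge of `G` lies on some `s`-`t` path. -/
def Reduced {V : Type} (G : SimpleGraph V) (s t : V) : Prop :=
  (∀ v : V, ∃ p : G.Walk s t, p.IsPath ∧ v ∈ p.support) ∧
  (∀ e ∈ G.edgeSet, ∃ p : G.Walk s t, p.IsPath ∧ e ∈ p.edges)

/-- Every cycle of length at least 4 has a chord. -/
def IsChordal {V : Type} (G : SimpleGraph V) : Prop :=
  ∀ (u : V) (c : G.Walk u u), c.IsCycle → 4 ≤ c.length →
    ∃ x ∈ c.support, ∃ y ∈ c.support, G.Adj x y ∧ s(x, y) ∉ c.edges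

/-- The set of vertices forced into every tracking set: common neighbours `x` of the
endpoints of some edge `(a,b)` such that some `s`-`t` path avoiding `x` uses `(a,b)`. -/
def forcedSet {V : Type} (G : SimpleGraph V) (s t : V) : Set V :=
  {x | ∃ a b : V, G.Adj a b ∧ G.Adj a x ∧ G.Adj b x ∧
    ∃ p : G.Walk s t, p.IsPath ∧ x ∉ p.support ∧ s(a, b) ∈ p.edges}

open List
set_option linter.unusedSectionVars false
set_option maxHeartbeats 1000000

namespace TrackAux


variable {α : Type}

lemma pair_ne {l : List α} (hl : l.Nodup) {x y : α} (h : [x,y] <+ l) : x ≠ y := by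
  rintro rfl
  have := h.nodup hl
  simp at this

lemma pair_total {l : List α} {x y : α} (hx : x ∈ l) (hy : y ∈ l) (hne : x ≠ y) :
    [x,y] <+ l ∨ [y,x] <+ l := by
  induction l with
  | nil => cases hx
  | cons a l ih =>
    rcases eq_or_ne a x with rfl | hax
    · left
      have hy' : y ∈ l := by
        rcases List.mem_cons.1 hy with rfl | h
        · exact absurd rfl hne
        · exact h
      exact List.cons_sublist_cons.mpr (List.singleton_sublist.mpr hy')
    · rcases eq_or_ne a y with rfl | hay
      · right
        have hx' : x ∈ l := by
          rcases List.mem_cons.1 hx with rfl | h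
          · exact absurd rfl hne.symm
          · exact h
        exact List.cons_sublist_cons.mpr (List.singleton_sublist.mpr hx')
      · have hx' : x ∈ l := by
          rcases List.mem_cons.1 hx with rfl | h
          · exact absurd rfl hax.symm
          · exact h
        have hy' : y ∈ l := by
          rcases List.mem_cons.1 hy with rfl | h
          · exact absurd rfl hay.symm
          · exact h
        rcases ih hx' hy' with h | h
        · exact Or.inl (h.cons a)
        · exact Or.inr (h.cons a)

lemma pair_descend {a x y : α} {l : List α} (h : [x,y] <+ a :: l) (hne : x ≠ a) :
    [x,y] <+ l := by
  cases h with
  | cons _ h => exact h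
  | cons_cons _ h => exact absurd rfl hne

lemma pair_asymm {l : List α} (hl : l.Nodup) {x y : α} (h1 : [x,y] <+ l) (h2 : [y,x] <+ l) :
    False := by
  have hne : x ≠ y := pair_ne hl h1
  induction l with
  | nil => cases h1
  | cons a l ih =>
    rcases List.nodup_cons.1 hl with ⟨hal, hl'⟩
    rcases eq_or_ne x a with rfl | hxa
    · -- x = a; from h2 : [y,x] <+ x::l with y ≠ x, descend: x ∈ l, contra
      have h2' : [y,x] <+ l := pair_descend h2 hne.symm
      exact hal (h2'.subset (by simp))
    · rcases eq_or_ne y a with rfl | hya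
      · have h1' : [x,y] <+ l := pair_descend h1 hxa
        exact hal (h1'.subset (by simp))
      · exact ih hl' (pair_descend h1 hxa) (pair_descend h2 hya)

lemma pair_trans {l : List α} (hl : l.Nodup) {x y z : α} (h1 : [x,y] <+ l) (h2 : [y,z] <+ l) :
    [x,z] <+ l := by
  induction l with
  | nil => cases h1
  | cons a l ih =>
    rcases List.nodup_cons.1 hl with ⟨hal, hl'⟩
    rcases eq_or_ne x a with rfl | hxa
    · -- x = a
      have hxy : x ≠ y := pair_ne hl h1
      have hyl : y ∈ l := by
        have : y ∈ x :: l := h1.subset (by simp)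
        rcases List.mem_cons.1 this with rfl | h
        · exact absurd rfl hxy
        · exact h
      have hya : y ≠ x := hxy.symm
      have h2' : [y,z] <+ l := pair_descend h2 hya
      have hzl : z ∈ l := h2'.subset (by simp)
      exact List.cons_sublist_cons.mpr (List.singleton_sublist.mpr hzl)
    · have h1' : [x,y] <+ l := pair_descend h1 hxa
      have hyl : y ∈ l := h1'.subset (by simp)
      have hya : y ≠ a := fun h => hal (h ▸ hyl)
      exact (ih hl' h1' (pair_descend h2 hya)).cons a

lemma eq_of_mem_of_orders : ∀ {l₁ l₂ : List α}, l₁.Nodup → l₂.Nodup →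
    (∀ x, x ∈ l₁ ↔ x ∈ l₂) → (∀ x y, [x,y] <+ l₁ → [x,y] <+ l₂) → l₁ = l₂ := by
  intro l₁
  induction l₁ with
  | nil =>
    intro l₂ _ _ hmem _
    symm
    rw [List.eq_nil_iff_forall_not_mem]
    exact fun x hx => by simpa using (hmem x).2 hx
  | cons a l ih =>
    intro l₂ h₁ h₂ hmem hord
    cases l₂ with
    | nil => exact absurd ((hmem a).1 (by simp)) (by simp)
    | cons b l₂' =>
      rcases List.nodup_cons.1 h₁ with ⟨hal, hl⟩
      rcases List.nodup_cons.1 h₂ with ⟨hbl, hl₂⟩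
      have hab : a = b := by
        by_contra hne
        have ha2 : a ∈ l₂' := by
          rcases List.mem_cons.1 ((hmem a).1 (by simp)) with h | h
          · exact absurd h hne
          · exact h
        have hb1 : b ∈ l := by
          rcases List.mem_cons.1 ((hmem b).2 (by simp)) with h | h
          · exact absurd h.symm hne
          · exact h
        have h2 : [a,b] <+ b :: l₂' :=
          hord _ _ (List.cons_sublist_cons.mpr (List.singleton_sublist.mpr hb1))
        have h3 : [b,a] <+ b :: l₂' :=
          List.cons_sublist_cons.mpr (List.singleton_sublist.mpr ha2)
        exact pair_asymm h₂ h2 h3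
      subst hab
      congr 1
      refine ih hl hl₂ (fun x => ⟨fun hx => ?_, fun hx => ?_⟩) (fun x y hxy => ?_)
      · rcases List.mem_cons.1 ((hmem x).1 (List.mem_cons_of_mem a hx)) with rfl | h
        · exact absurd hx hal
        · exact h
      · rcases List.mem_cons.1 ((hmem x).2 (List.mem_cons_of_mem a hx)) with rfl | h
        · exact absurd hx hbl
        · exact h
      · have hx : x ∈ l := hxy.subset (by simp)
        have := hord x y (hxy.cons a)
        exact pair_descend this (fun h => hal (h ▸ hx))


variable {V : Type} [DecidableEq V] {G : SimpleGraph V} {u w x y : V}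

lemma path_loop_nil {p : G.Walk u u} (hp : p.IsPath) : p = Walk.nil := by
  cases p with
  | nil => rfl
  | cons h q =>
    rw [Walk.cons_isPath_iff] at hp
    exact absurd q.end_mem_support hp.2

lemma support_split (p : G.Walk u w) (hx : x ∈ p.support) :
    p.support = (p.takeUntil x hx).support ++ (p.dropUntil x hx).support.tail := by
  conv_lhs => rw [← p.take_spec hx]
  rw [Walk.support_append]

lemma mem_take_or_drop (p : G.Walk u w) (hx : x ∈ p.support) (hy : y ∈ p.support) :
    y ∈ (p.takeUntil x hx).support ∨ y ∈ (p.dropUntil x hx).support := by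
  conv at hy => rw [← p.take_spec hx]
  exact (Walk.mem_support_append_iff _ _).1 hy

lemma take_support_concat (p : G.Walk u w) (hx : x ∈ p.support) :
    (p.takeUntil x hx).support = (p.takeUntil x hx).support.dropLast ++ [x] := by
  have h1 : (p.takeUntil x hx).support.getLast (Walk.support_ne_nil _) = x :=
    Walk.getLast_support _
  conv_lhs => rw [← List.dropLast_append_getLast (Walk.support_ne_nil (p.takeUntil x hx))]
  rw [h1]

lemma pair_of_mem_drop {p : G.Walk u w} (hx : x ∈ p.support)
    (hy : y ∈ (p.dropUntil x hx).support) (hne : y ≠ x) : [x,y] <+ p.support := by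
  rw [support_split p hx, take_support_concat]
  have hy' : y ∈ (p.dropUntil x hx).support.tail := by
    have h := (p.dropUntil x hx).support_eq_cons
    rw [h] at hy
    rcases List.mem_cons.1 hy with rfl | h'
    · exact absurd rfl hne
    · exact h'
  have h1 : [x] <+ (p.takeUntil x hx).support.dropLast ++ [x] :=
    List.sublist_append_right _ _
  have h2 : [y] <+ (p.dropUntil x hx).support.tail := List.singleton_sublist.mpr hy'
  exact h1.append h2

lemma pair_of_mem_take {p : G.Walk u w} (hx : x ∈ p.support)
    (hy : y ∈ (p.takeUntil x hx).support) (hne : y ≠ x) : [y,x] <+ p.support := by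
  rw [support_split p hx]
  have hy' : y ∈ (p.takeUntil x hx).support.dropLast := by
    have h := take_support_concat p hx
    rw [h] at hy
    rcases List.mem_append.1 hy with h' | h'
    · exact h'
    · simp at h'
      exact absurd h' hne
  have h1 : [y] <+ (p.takeUntil x hx).support.dropLast := List.singleton_sublist.mpr hy'
  have h2 : [x] <+ x :: (p.dropUntil x hx).support.tail := by simp
  have := h1.append h2
  rw [take_support_concat p hx, List.append_assoc]
  exact this

lemma mem_drop_of_pair {p : G.Walk u w} (hp : p.IsPath) (h : [x,y] <+ p.support) :
    ∃ hx : x ∈ p.support, y ∈ (p.dropUntil x hx).support ∧ y ≠ x := by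
  have hx : x ∈ p.support := h.subset (by simp)
  have hy : y ∈ p.support := h.subset (by simp)
  have hne : x ≠ y := pair_ne hp.support_nodup h
  refine ⟨hx, ?_, hne.symm⟩
  rcases mem_take_or_drop p hx hy with htk | hdr
  · exact absurd (pair_of_mem_take hx htk hne.symm)
      (fun h' => (pair_asymm hp.support_nodup h h').elim)
  · exact hdr

lemma eq_of_mem_take_mem_drop {p : G.Walk u w} (hp : p.IsPath) (hx : x ∈ p.support)
    (h1 : y ∈ (p.takeUntil x hx).support) (h2 : y ∈ (p.dropUntil x hx).support) : y = x := by
  by_contra hne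
  exact pair_asymm hp.support_nodup (pair_of_mem_drop hx h2 hne) (pair_of_mem_take hx h1 hne)

lemma start_not_mem_drop {p : G.Walk u w} (hp : p.IsPath) (hx : x ∈ p.support) (hne : x ≠ u) :
    u ∉ (p.dropUntil x hx).support := by
  intro hu
  have hpair : [x, u] <+ p.support := pair_of_mem_drop hx hu (Ne.symm hne)
  have h := p.support_eq_cons
  rw [h] at hpair
  have := pair_descend hpair hne
  have hnd := hp.support_nodup
  rw [h, List.nodup_cons] at hnd
  exact hnd.1 (this.subset (by simp))

lemma end_not_mem_take {p : G.Walk u w} (hp : p.IsPath) (hx : x ∈ p.support) (hne : x ≠ w) :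
    w ∉ (p.takeUntil x hx).support := by
  intro hw
  have hpair : [w, x] <+ p.support := pair_of_mem_take hx hw (Ne.symm hne)
  obtain ⟨hw', hx', hxw⟩ := mem_drop_of_pair hp hpair
  have : p.dropUntil w hw' = Walk.nil := path_loop_nil (hp.dropUntil hw')
  rw [this] at hx'
  simp [Walk.support_nil] at hx'
  exact hxw hx'

lemma take_add_drop_length (p : G.Walk u w) (hx : x ∈ p.support) :
    (p.takeUntil x hx).length + (p.dropUntil x hx).length = p.length := by
  have := congrArg Walk.length (p.take_spec hx)
  rwa [Walk.length_append] at this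

lemma length_zero_eq {p : G.Walk u w} (h : p.length = 0) : u = w := by
  cases p with
  | nil => rfl
  | cons h' q => simp at h

lemma take_length_pos {p : G.Walk u w} (hx : x ∈ p.support) (hne : x ≠ u) :
    1 ≤ (p.takeUntil x hx).length := by
  by_contra h
  push_neg at h
  interval_cases h' : (p.takeUntil x hx).length
  · exact hne (length_zero_eq h').symm

lemma drop_length_pos {p : G.Walk u w} (hx : x ∈ p.support) (hne : x ≠ w) :
    1 ≤ (p.dropUntil x hx).length := by
  by_contra h
  push_neg at h
  interval_cases h' : (p.dropUntil x hx).length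
  · exact hne (length_zero_eq h')


variable {V : Type} [DecidableEq V] {G : SimpleGraph V} {s t u w x y v : V}

lemma mem_trackSeq {T : Set V} {l : List V} : x ∈ trackSeq T l ↔ x ∈ l ∧ x ∈ T := by
  simp only [trackSeq, List.mem_filter, decide_eq_true_eq]

lemma trackSeq_nodup {T : Set V} {l : List V} (h : l.Nodup) : (trackSeq T l).Nodup :=
  h.filter _

lemma pair_trackSeq {T : Set V} {l : List V} (h : [x,y] <+ l) (hx : x ∈ T) (hy : y ∈ T) :
    [x,y] <+ trackSeq T l := by
  have h2 := h.filter (fun v => @decide (v ∈ T) (Classical.propDecidable _))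
  have h3 : List.filter (fun v => @decide (v ∈ T) (Classical.propDecidable _)) [x,y] = [x,y] := by
    simp [hx, hy]
  rw [h3] at h2
  exact h2

lemma mem_forced {a b : V} (hab : G.Adj a b) (hax : G.Adj a x) (hbx : G.Adj b x)
    (R : G.Walk s t) (hR : R.IsPath) (hx : x ∉ R.support) (he : s(a,b) ∈ R.edges) :
    x ∈ forcedSet G s t := ⟨a, b, hab, hax, hbx, R, hR, hx, he⟩

lemma forced_symm (h : x ∈ forcedSet G t s) : x ∈ forcedSet G s t := by
  obtain ⟨a,b,hab,hax,hbx,p,hp,hxp,he⟩ := h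
  exact ⟨a,b,hab,hax,hbx,p.reverse, hp.reverse,
    by rwa [Walk.support_reverse, List.mem_reverse],
    by rwa [Walk.edges_reverse, List.mem_reverse]⟩

lemma walk_eq_of_support_eq : ∀ {u : V} (p q : G.Walk u w), p.support = q.support → p = q := by
  intro u p
  induction p with
  | nil =>
    intro q h
    cases q with
    | nil => rfl
    | cons h' r =>
      exfalso
      rw [Walk.support_nil, Walk.support_cons] at h
      have := congrArg List.length h
      simp [Walk.length_support] at this
  | cons h' r ih =>
    intro q hq
    cases q with
    | nil =>
      exfalso
      rw [Walk.support_nil, Walk.support_cons] at hq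
      have := congrArg List.length hq
      simp [Walk.length_support] at this
    | cons h'' r' =>
      rw [Walk.support_cons, Walk.support_cons] at hq
      have htl := List.tail_eq_of_cons_eq hq
      have hhd : _ = _ := congrArg List.head? htl
      rw [r.support_eq_cons, r'.support_eq_cons] at hhd
      simp only [List.head?_cons, Option.some.injEq] at hhd
      subst hhd
      rw [ih r' htl]

lemma edge_ends_length_one {p : G.Walk u w} (hp : p.IsPath) (he : s(u,w) ∈ p.edges) :
    p.length = 1 := by
  cases p with
  | nil => simp [Walk.edges_nil] at he
  | cons h' q =>
    rw [Walk.edges_cons] at he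
    rw [Walk.cons_isPath_iff] at hp
    rcases List.mem_cons.1 he with heq | hmem
    · rcases Sym2.eq_iff.1 heq with ⟨-, rfl⟩ | ⟨rfl, rfl⟩
      · rw [path_loop_nil hp.1]
        simp
      · exact absurd q.end_mem_support hp.2
    · exact absurd (q.fst_mem_support_of_mem_edges hmem) hp.2

lemma walk_length_one {p : G.Walk u w} (h : p.length = 1) :
    ∃ (ha : G.Adj u w), p = Walk.cons ha Walk.nil := by
  cases p with
  | nil => simp at h
  | cons h' q =>
    cases q with
    | nil => exact ⟨h', rfl⟩
    | cons h'' q' => simp [Walk.length_cons] at h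

lemma walk_length_two {p : G.Walk u w} (h : p.length = 2) (hv : v ∈ p.support)
    (h1 : v ≠ u) (h2 : v ≠ w) : G.Adj u v ∧ G.Adj v w := by
  cases p with
  | nil => simp at h
  | cons ha q =>
    cases q with
    | nil => simp at h
    | cons hb q' =>
      cases q' with
      | nil =>
        simp only [Walk.support_cons, Walk.support_nil, List.mem_cons] at hv
        rcases hv with rfl | hv
        · exact absurd rfl h1
        · rcases hv with rfl | hv
          · exact ⟨ha, hb⟩
          · simp at hv
            exact absurd hv h2
      | cons hc q'' => simp [Walk.length_cons] at h

lemma lens_support {γ δ : V} {W₁ W₂ : G.Walk γ δ} {z : V} :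
    z ∈ (W₁.append W₂.reverse).support ↔ z ∈ W₁.support ∨ z ∈ W₂.support := by
  rw [Walk.mem_support_append_iff, Walk.support_reverse, List.mem_reverse]

lemma lens_edges {γ δ : V} {W₁ W₂ : G.Walk γ δ} {e : Sym2 V} :
    e ∈ (W₁.append W₂.reverse).edges ↔ e ∈ W₁.edges ∨ e ∈ W₂.edges := by
  rw [Walk.edges_append, List.mem_append, Walk.edges_reverse, List.mem_reverse]

lemma lens_length {γ δ : V} {W₁ W₂ : G.Walk γ δ} :
    (W₁.append W₂.reverse).length = W₁.length + W₂.length := by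
  rw [Walk.length_append, Walk.length_reverse]

lemma cycle_of_lens {γ δ : V} {W₁ W₂ : G.Walk γ δ} (h₁ : W₁.IsPath) (h₂ : W₂.IsPath)
    (hdisj : ∀ z, z ∈ W₁.support → z ∈ W₂.support → z = γ ∨ z = δ)
    (hlen : 2 ≤ W₁.length) : (W₁.append W₂.reverse).IsCycle := by
  have hgd : γ ≠ δ := by
    intro h
    subst h
    rw [path_loop_nil h₁] at hlen
    simp at hlen
  rw [Walk.isCycle_def]
  refine ⟨⟨?_⟩, ?_, ?_⟩
  · -- edges nodup
    rw [Walk.edges_append, Walk.edges_reverse]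
    rw [List.nodup_append']
    refine ⟨h₁.isTrail.edges_nodup, (List.nodup_reverse.mpr h₂.isTrail.edges_nodup), ?_⟩
    intro e he1 he2
    rw [List.mem_reverse] at he2
    induction e with
    | h a b =>
      have hab : G.Adj a b := W₁.adj_of_mem_edges he1
      have ha : a = γ ∨ a = δ :=
        hdisj a (W₁.fst_mem_support_of_mem_edges he1) (W₂.fst_mem_support_of_mem_edges he2)
      have hb : b = γ ∨ b = δ :=
        hdisj b (W₁.snd_mem_support_of_mem_edges he1) (W₂.snd_mem_support_of_mem_edges he2)
      have hne : a ≠ b := hab.ne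
      have he1' : s(γ, δ) ∈ W₁.edges := by
        rcases ha with rfl | rfl <;> rcases hb with rfl | rfl
        · exact absurd rfl hne
        · exact he1
        · rwa [Sym2.eq_swap]
        · exact absurd rfl hne
      have := edge_ends_length_one h₁ he1'
      omega
  · -- ne nil
    intro hn
    have := congrArg Walk.length hn
    rw [Walk.length_append, Walk.length_reverse] at this
    simp only [Walk.length_nil] at this
    omega
  · -- support tail nodup
    rw [Walk.tail_support_append]
    rw [List.nodup_append']
    refine ⟨(List.tail_sublist _).nodup h₁.support_nodup,
      (List.tail_sublist _).nodup h₂.reverse.support_nodup, ?_⟩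
    intro z hz1 hz2
    have hz1' : z ∈ W₁.support := (List.tail_sublist _).subset hz1
    have hz2' : z ∈ W₂.support := by
      have := (List.tail_sublist _).subset hz2
      rwa [Walk.support_reverse, List.mem_reverse] at this
    have hzg : z ≠ γ := by
      intro h
      subst h
      have := h₁.support_nodup
      rw [W₁.support_eq_cons, List.nodup_cons] at this
      exact this.1 hz1
    have hzd : z ≠ δ := by
      intro h
      subst h
      have := h₂.reverse.support_nodup
      rw [W₂.reverse.support_eq_cons, List.nodup_cons] at this
      exact this.1 hz2
    rcases hdisj z hz1' hz2' with h | h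
    · exact hzg h
    · exact hzd h


variable {V : Type} [DecidableEq V] {G : SimpleGraph V} {s t u w x y v γ δ : V}

/-- support of the three-piece path. -/
lemma triple_support (P₁ : G.Walk s γ) (W₁ : G.Walk γ δ) (P₂ : G.Walk δ t) :
    (P₁.append (W₁.append P₂)).support
      = P₁.support ++ (W₁.support.tail ++ P₂.support.tail) := by
  rw [Walk.support_append, Walk.tail_support_append]

lemma mem_triple {P₁ : G.Walk s γ} {W₁ : G.Walk γ δ} {P₂ : G.Walk δ t} {z : V} :
    z ∈ (P₁.append (W₁.append P₂)).support ↔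
      z ∈ P₁.support ∨ z ∈ W₁.support ∨ z ∈ P₂.support := by
  rw [Walk.mem_support_append_iff, Walk.mem_support_append_iff]

/-- walk of positive length has distinct endpoints if it is a path -/
lemma path_end_ne {p : G.Walk u w} (hp : p.IsPath) (h : 1 ≤ p.length) : u ≠ w := by
  rintro rfl
  rw [path_loop_nil hp] at h
  simp at h

/-- a vertex in the support distinct from both endpoints forces length ≥ 2 -/
lemma mid_length {p : G.Walk u w} (hv : v ∈ p.support) (h1 : v ≠ u) (h2 : v ≠ w) :
    2 ≤ p.length := by
  by_contra h
  push_neg at h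
  interval_cases h' : p.length
  · have : u = w := length_zero_eq h'
    cases p with
    | nil => simp [Walk.support_nil] at hv; exact h1 hv
    | cons ha q => simp [Walk.length_cons] at h'
  · obtain ⟨ha, rfl⟩ := walk_length_one h'
    simp [Walk.support_cons, Walk.support_nil] at hv
    rcases hv with rfl | rfl
    · exact h1 rfl
    · exact h2 rfl

/-- middle vertex is in the tail of support -/
lemma mem_support_tail_of_ne_start {p : G.Walk u w} (hv : v ∈ p.support) (h1 : v ≠ u) :
    v ∈ p.support.tail := by
  rw [p.support_eq_cons] at hv
  rcases List.mem_cons.1 hv with rfl | h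
  · exact absurd rfl h1
  · exact h

/-- master surgery: replacing the middle piece by one whose support-tail is a sublist. -/
lemma path_replace_mid {P₁ : G.Walk s γ} {W₁ : G.Walk γ δ} {P₂ : G.Walk δ t}
    {γ' δ' : V} {W' : G.Walk γ' δ'} {Q₁ : G.Walk s γ'} {Q₂ : G.Walk δ' t}
    (hP : (P₁.append (W₁.append P₂)).IsPath)
    (hq1 : Q₁.support = P₁.support) (hq2 : Q₂.support = P₂.support)
    (hsub : W'.support.tail <+ W₁.support.tail) :
    (Q₁.append (W'.append Q₂)).IsPath := by
  rw [Walk.isPath_def] at hP ⊢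
  rw [triple_support] at hP ⊢
  rw [hq1, hq2]
  refine List.Sublist.nodup ?_ hP
  refine List.Sublist.append_left ?_ _
  exact hsub.append_right _


variable {V : Type} [DecidableEq V] {G : SimpleGraph V} {s t u w x y v γ δ c c' : V}

/-- the suffix from `c'` sits inside the support-tail. -/
lemma drop_support_sublist_tail (D : G.Walk c w) (hd : c' ∈ D.support) (hcc : c' ≠ c) :
    (D.dropUntil c' hd).support <+ D.support.tail := by
  have hsplit := support_split D hd
  have htk : (D.takeUntil c' hd).support
      = (D.takeUntil c' hd).support.dropLast ++ [c'] := by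
    have h1 : (D.takeUntil c' hd).support.getLast (Walk.support_ne_nil _) = c' :=
      Walk.getLast_support _
    conv_lhs => rw [← List.dropLast_append_getLast (Walk.support_ne_nil (D.takeUntil c' hd))]
    rw [h1]
  -- support.tail of D
  have htail : D.support.tail
      = (D.takeUntil c' hd).support.tail ++ (D.dropUntil c' hd).support.tail := by
    rw [hsplit, List.tail_append_of_ne_nil (Walk.support_ne_nil _)]
  rw [htail]
  -- takeUntil.support = c :: ttail with ttail ending in c'
  have hcons := (D.takeUntil c' hd).support_eq_cons
  have httail : (D.takeUntil c' hd).support.tail ≠ [] := by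
    intro hnil
    have h2 := htk
    rw [hcons, hnil] at h2
    simp at h2
    exact hcc h2.symm
  -- tail of take ends with c'
  have hgl : (D.takeUntil c' hd).support.tail.getLast httail = c' := by
    rw [List.getLast_tail httail]
    exact Walk.getLast_support _
  have : (D.takeUntil c' hd).support.tail
      = (D.takeUntil c' hd).support.tail.dropLast ++ [c'] := by
    conv_lhs => rw [← List.dropLast_append_getLast httail]
    rw [hgl]
  rw [this, List.append_assoc]
  have : (D.dropUntil c' hd).support = c' :: (D.dropUntil c' hd).support.tail :=
    (D.dropUntil c' hd).support_eq_cons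
  rw [this]
  exact List.sublist_append_right _ _

/-- shortcut support sublist: full version -/
lemma shortcut_support_sublist {a b : V} {W : G.Walk a b} (hc : c ∈ W.support)
    (hd : c' ∈ (W.dropUntil c hc).support) (hcc : c' ≠ c) (hadj : G.Adj c c') :
    ((W.takeUntil c hc).append
      (Walk.cons hadj ((W.dropUntil c hc).dropUntil c' hd))).support <+ W.support := by
  rw [Walk.support_append, support_split W hc]
  refine List.Sublist.append_left ?_ _
  have : (Walk.cons hadj ((W.dropUntil c hc).dropUntil c' hd)).support.tail
      = ((W.dropUntil c hc).dropUntil c' hd).support := by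
    rw [Walk.support_cons, List.tail_cons]
  rw [this]
  exact drop_support_sublist_tail _ hd hcc

/-- shortcut support-tail sublist -/
lemma shortcut_tail_sublist {a b : V} {W : G.Walk a b} (hc : c ∈ W.support)
    (hd : c' ∈ (W.dropUntil c hc).support) (hcc : c' ≠ c) (hadj : G.Adj c c') :
    ((W.takeUntil c hc).append
      (Walk.cons hadj ((W.dropUntil c hc).dropUntil c' hd))).support.tail
      <+ W.support.tail := by
  rw [Walk.tail_support_append]
  have hW : W.support.tail
      = (W.takeUntil c hc).support.tail ++ (W.dropUntil c hc).support.tail := by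
    rw [support_split W hc, List.tail_append_of_ne_nil (Walk.support_ne_nil _)]
  rw [hW]
  refine List.Sublist.append_left ?_ _
  have : (Walk.cons hadj ((W.dropUntil c hc).dropUntil c' hd)).support.tail
      = ((W.dropUntil c hc).dropUntil c' hd).support := by
    rw [Walk.support_cons, List.tail_cons]
  rw [this]
  exact drop_support_sublist_tail _ hd hcc

/-- if the chord is not an edge of W then the middle segment has length ≥ 2 -/
lemma seg_length_two {a b : V} {W : G.Walk a b} (hc : c ∈ W.support)
    (hd : c' ∈ (W.dropUntil c hc).support) (hcc : c' ≠ c)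
    (hnotedge : s(c,c') ∉ W.edges) :
    2 ≤ ((W.dropUntil c hc).takeUntil c' hd).length := by
  by_contra h
  push_neg at h
  interval_cases h' : ((W.dropUntil c hc).takeUntil c' hd).length
  · exact hcc (length_zero_eq h').symm
  · obtain ⟨ha, heq⟩ := walk_length_one h'
    have : s(c,c') ∈ ((W.dropUntil c hc).takeUntil c' hd).edges := by
      rw [heq]; simp
    exact hnotedge (Walk.edges_dropUntil_subset _ hc (Walk.edges_takeUntil_subset _ hd this))



section Dlem
variable {V : Type} [DecidableEq V] {G : SimpleGraph V} {s t u w x y v γ δ c c' : V} {n : ℕ}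

def DIH (G : SimpleGraph V) (n : ℕ) : Prop :=
  ∀ (s t γ δ v : V) (P₁ : G.Walk s γ) (W₁ : G.Walk γ δ) (P₂ : G.Walk δ t) (W₂ : G.Walk γ δ),
    (P₁.append (W₁.append P₂)).IsPath → W₂.IsPath →
    (∀ x ∈ W₂.support, x ≠ γ → x ≠ δ → x ∉ (P₁.append (W₁.append P₂)).support) →
    v ∈ W₁.support → v ≠ γ → v ≠ δ →
    W₁.length + W₂.length ≤ n →
    v ∈ forcedSet G s t

lemma caseBase (P₁ : G.Walk s γ) (W₁ : G.Walk γ δ) (P₂ : G.Walk δ t) (W₂ : G.Walk γ δ)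
    (hP : (P₁.append (W₁.append P₂)).IsPath) (hW₂ : W₂.IsPath)
    (hv : v ∈ W₁.support) (hvγ : v ≠ γ) (hvδ : v ≠ δ)
    (h1 : W₁.length = 2) (h2 : W₂.length = 1) :
    v ∈ forcedSet G s t := by
  obtain ⟨hγv, hvδ'⟩ := walk_length_two h1 hv hvγ hvδ
  obtain ⟨hγδ, -⟩ := walk_length_one h2
  have hδtail : δ ∈ W₁.support.tail :=
    mem_support_tail_of_ne_start W₁.end_mem_support hγδ.ne.symm
  have hsub : (Walk.cons hγδ (Walk.nil) : G.Walk γ δ).support.tail <+ W₁.support.tail := by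
    rw [Walk.support_cons, Walk.support_nil, List.tail_cons]
    exact List.singleton_sublist.mpr hδtail
  have hR : (P₁.append ((Walk.cons hγδ Walk.nil).append P₂)).IsPath :=
    path_replace_mid hP rfl rfl hsub
  refine mem_forced hγδ hγv hvδ'.symm _ hR ?_ ?_
  · intro hmem
    rw [triple_support] at hmem
    have hPn := hP
    rw [Walk.isPath_def, triple_support] at hPn
    have hvW : v ∈ W₁.support.tail := mem_support_tail_of_ne_start hv hvγ
    rcases List.nodup_append'.1 hPn with ⟨-, hnd2, hdisj⟩
    rcases List.mem_append.1 hmem with h | h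
    · exact hdisj h (List.mem_append_left _ hvW)
    · rw [Walk.support_cons, Walk.support_nil, List.tail_cons] at h
      rcases List.mem_append.1 h with h' | h'
      · rcases List.mem_singleton.1 h' with rfl
        exact hvδ rfl
      · rcases List.nodup_append'.1 hnd2 with ⟨-, -, hdisj2⟩
        exact hdisj2 hvW h'
  · rw [Walk.edges_append, Walk.edges_append, Walk.edges_cons]
    simp

lemma case1' (ihn : DIH G n) (P₁ : G.Walk s γ) (W₁ : G.Walk γ δ) (P₂ : G.Walk δ t) (W₂ : G.Walk γ δ)
    (hP : (P₁.append (W₁.append P₂)).IsPath) (hW₂ : W₂.IsPath)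
    (hinv : ∀ x ∈ W₂.support, x ≠ γ → x ≠ δ → x ∉ (P₁.append (W₁.append P₂)).support)
    (hv : v ∈ W₁.support) (hvγ : v ≠ γ) (hvδ : v ≠ δ)
    (hsum : W₁.length + W₂.length ≤ n + 1)
    (hadj : G.Adj c c') (hc : c ∈ W₁.support)
    (hd : c' ∈ (W₁.dropUntil c hc).support)
    (hne1 : s(c,c') ∉ W₁.edges) (hne2 : s(c,c') ∉ W₂.edges) :
    v ∈ forcedSet G s t := by
  have hW₁ : W₁.IsPath := (hP.of_append_right).of_append_left
  have hcc : c ≠ c' := hadj.ne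
  have hW₁len : 2 ≤ W₁.length := mid_length hv hvγ hvδ
  have hγδ : γ ≠ δ := path_end_ne hW₁ (by omega)
  have hW₂len : 1 ≤ W₂.length := by
    by_contra h
    push_neg at h
    interval_cases h' : W₂.length
    · exact hγδ (length_zero_eq h')
  have hlA : (W₁.takeUntil c hc).length + (W₁.dropUntil c hc).length = W₁.length :=
    take_add_drop_length W₁ hc
  have hlB : ((W₁.dropUntil c hc).takeUntil c' hd).length
      + ((W₁.dropUntil c hc).dropUntil c' hd).length = (W₁.dropUntil c hc).length :=
    take_add_drop_length _ hd
  have hBlen : 2 ≤ ((W₁.dropUntil c hc).takeUntil c' hd).length :=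
    seg_length_two hc hd hcc.symm hne1
  by_cases hvB : v ∈ ((W₁.dropUntil c hc).takeUntil c' hd).support ∧ v ≠ c ∧ v ≠ c'
  · obtain ⟨hvB', hvc, hvc'⟩ := hvB
    have hmeas2 : 2 ≤ (W₁.takeUntil c hc).length
        + ((W₁.dropUntil c hc).dropUntil c' hd).length + W₂.length := by
      by_cases hcγ : c = γ
      · by_cases hc'δ : c' = δ
        · subst hcγ
          subst hc'δ
          have h12 : W₂.length = 1 ∨ 2 ≤ W₂.length := by omega
          rcases h12 with h' | h'
          · obtain ⟨ha, rfl⟩ := walk_length_one h'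
            exact absurd (by simp : s(c,c') ∈ (Walk.cons ha Walk.nil : G.Walk c c').edges) hne2
          · omega
        · have := drop_length_pos (p := (W₁.dropUntil c hc)) hd hc'δ
          omega
      · have := take_length_pos (p := W₁) hc hcγ
        omega
    have hGE : ((P₁.append (W₁.takeUntil c hc)).append
        (((W₁.dropUntil c hc).takeUntil c' hd).append
          ((((W₁.dropUntil c hc).dropUntil c' hd)).append P₂)))
        = P₁.append (W₁.append P₂) := by
      rw [← Walk.append_assoc P₁ (W₁.takeUntil c hc) _,
        Walk.append_assoc ((W₁.dropUntil c hc).takeUntil c' hd)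
          ((W₁.dropUntil c hc).dropUntil c' hd) P₂,
        (W₁.dropUntil c hc).take_spec hd,
        Walk.append_assoc (W₁.takeUntil c hc) (W₁.dropUntil c hc) P₂,
        W₁.take_spec hc]
    have hP' : ((P₁.append (W₁.takeUntil c hc)).append
        (((W₁.dropUntil c hc).takeUntil c' hd).append
          ((((W₁.dropUntil c hc).dropUntil c' hd)).append P₂))).IsPath := by
      rw [hGE]
      exact hP
    refine ihn s t c c' v _ _ _ (Walk.cons hadj Walk.nil) hP' ?_ ?_ hvB' hvc hvc' ?_
    · rw [Walk.cons_isPath_iff]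
      constructor
      · exact Walk.IsPath.nil
      · rw [Walk.support_nil]
        simp [hcc]
    · intro x hx h1 h2
      rw [Walk.support_cons, Walk.support_nil] at hx
      rcases List.mem_cons.1 hx with rfl | hx'
      · exact absurd rfl h1
      · rcases List.mem_singleton.1 hx' with rfl
        exact absurd rfl h2
    · rw [Walk.length_cons, Walk.length_nil]
      omega
  · have hvAC : v ∈ (W₁.takeUntil c hc).support
        ∨ v ∈ ((W₁.dropUntil c hc).dropUntil c' hd).support := by
      rcases mem_take_or_drop W₁ hc hv with h | h
      · exact Or.inl h
      · rcases mem_take_or_drop _ hd h with h' | h'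
        · by_cases hvc : v = c
          · left
            rw [hvc]
            exact Walk.end_mem_support _
          · by_cases hvc' : v = c'
            · right
              rw [hvc']
              exact Walk.start_mem_support _
            · exact absurd ⟨h', hvc, hvc'⟩ hvB
        · exact Or.inr h'
    have hsubtail := shortcut_tail_sublist hc hd hcc.symm hadj
    have hP' : (P₁.append (((W₁.takeUntil c hc).append
        (Walk.cons hadj ((W₁.dropUntil c hc).dropUntil c' hd))).append P₂)).IsPath :=
      path_replace_mid hP rfl rfl hsubtail
    refine ihn s t γ δ v P₁ _ P₂ W₂ hP' hW₂ ?_ ?_ hvγ hvδ ?_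
    · intro x hx h1 h2
      have hold := hinv x hx h1 h2
      intro hmem
      apply hold
      rw [triple_support] at hmem ⊢
      rcases List.mem_append.1 hmem with h | h
      · exact List.mem_append_left _ h
      · rcases List.mem_append.1 h with h' | h'
        · exact List.mem_append_right _ (List.mem_append_left _ (hsubtail.subset h'))
        · exact List.mem_append_right _ (List.mem_append_right _ h')
    · rw [Walk.mem_support_append_iff]
      rcases hvAC with h | h
      · exact Or.inl h
      · right
        rw [Walk.support_cons]
        exact List.mem_cons_of_mem _ h
    · rw [Walk.length_append, Walk.length_cons]
      omega

lemma case1 (ihn : DIH G n) (P₁ : G.Walk s γ) (W₁ : G.Walk γ δ) (P₂ : G.Walk δ t) (W₂ : G.Walk γ δ)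
    (hP : (P₁.append (W₁.append P₂)).IsPath) (hW₂ : W₂.IsPath)
    (hinv : ∀ x ∈ W₂.support, x ≠ γ → x ≠ δ → x ∉ (P₁.append (W₁.append P₂)).support)
    (hv : v ∈ W₁.support) (hvγ : v ≠ γ) (hvδ : v ≠ δ)
    (hsum : W₁.length + W₂.length ≤ n + 1)
    (hadj : G.Adj c c') (hc : c ∈ W₁.support) (hc' : c' ∈ W₁.support)
    (hne1 : s(c,c') ∉ W₁.edges) (hne2 : s(c,c') ∉ W₂.edges) :
    v ∈ forcedSet G s t := by
  have hW₁ : W₁.IsPath := (hP.of_append_right).of_append_left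
  have hcc : c ≠ c' := hadj.ne
  rcases mem_take_or_drop W₁ hc hc' with h | h
  · have hpair : [c',c] <+ W₁.support := pair_of_mem_take hc h hcc.symm
    obtain ⟨hx, hmem, -⟩ := mem_drop_of_pair hW₁ hpair
    refine case1' ihn P₁ W₁ P₂ W₂ hP hW₂ hinv hv hvγ hvδ hsum hadj.symm hx hmem ?_ ?_
    · rwa [Sym2.eq_swap]
    · rwa [Sym2.eq_swap]
  · exact case1' ihn P₁ W₁ P₂ W₂ hP hW₂ hinv hv hvγ hvδ hsum hadj hc h hne1 hne2

lemma case2' (ihn : DIH G n) (P₁ : G.Walk s γ) (W₁ : G.Walk γ δ) (P₂ : G.Walk δ t) (W₂ : G.Walk γ δ)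
    (hP : (P₁.append (W₁.append P₂)).IsPath) (hW₂ : W₂.IsPath)
    (hinv : ∀ x ∈ W₂.support, x ≠ γ → x ≠ δ → x ∉ (P₁.append (W₁.append P₂)).support)
    (hv : v ∈ W₁.support) (hvγ : v ≠ γ) (hvδ : v ≠ δ)
    (hsum : W₁.length + W₂.length ≤ n + 1)
    (hadj : G.Adj c c') (hc : c ∈ W₂.support)
    (hd : c' ∈ (W₂.dropUntil c hc).support)
    (hne2 : s(c,c') ∉ W₂.edges) :
    v ∈ forcedSet G s t := by
  have hcc : c ≠ c' := hadj.ne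
  have hsubfull := shortcut_support_sublist hc hd hcc.symm hadj
  have hW₂' : ((W₂.takeUntil c hc).append
      (Walk.cons hadj ((W₂.dropUntil c hc).dropUntil c' hd))).IsPath := by
    rw [Walk.isPath_def]
    exact hsubfull.nodup hW₂.support_nodup
  have hlA : (W₂.takeUntil c hc).length + (W₂.dropUntil c hc).length = W₂.length :=
    take_add_drop_length W₂ hc
  have hlB : ((W₂.dropUntil c hc).takeUntil c' hd).length
      + ((W₂.dropUntil c hc).dropUntil c' hd).length = (W₂.dropUntil c hc).length :=
    take_add_drop_length _ hd
  have hBlen : 2 ≤ ((W₂.dropUntil c hc).takeUntil c' hd).length :=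
    seg_length_two hc hd hcc.symm hne2
  refine ihn s t γ δ v P₁ W₁ P₂ _ hP hW₂' ?_ hv hvγ hvδ ?_
  · intro x hx h1 h2
    exact hinv x (hsubfull.subset hx) h1 h2
  · rw [Walk.length_append, Walk.length_cons]
    omega

lemma case2 (ihn : DIH G n) (P₁ : G.Walk s γ) (W₁ : G.Walk γ δ) (P₂ : G.Walk δ t) (W₂ : G.Walk γ δ)
    (hP : (P₁.append (W₁.append P₂)).IsPath) (hW₂ : W₂.IsPath)
    (hinv : ∀ x ∈ W₂.support, x ≠ γ → x ≠ δ → x ∉ (P₁.append (W₁.append P₂)).support)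
    (hv : v ∈ W₁.support) (hvγ : v ≠ γ) (hvδ : v ≠ δ)
    (hsum : W₁.length + W₂.length ≤ n + 1)
    (hadj : G.Adj c c') (hc : c ∈ W₂.support) (hc' : c' ∈ W₂.support)
    (hne2 : s(c,c') ∉ W₂.edges) :
    v ∈ forcedSet G s t := by
  have hcc : c ≠ c' := hadj.ne
  rcases mem_take_or_drop W₂ hc hc' with h | h
  · have hpair : [c',c] <+ W₂.support := pair_of_mem_take hc h hcc.symm
    obtain ⟨hx, hmem, -⟩ := mem_drop_of_pair hW₂ hpair
    refine case2' ihn P₁ W₁ P₂ W₂ hP hW₂ hinv hv hvγ hvδ hsum hadj.symm hx hmem ?_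
    rwa [Sym2.eq_swap]
  · exact case2' ihn P₁ W₁ P₂ W₂ hP hW₂ hinv hv hvγ hvδ hsum hadj hc h hne2

lemma caseCross (ihn : DIH G n) (P₁ : G.Walk s γ) (W₁ : G.Walk γ δ) (P₂ : G.Walk δ t) (W₂ : G.Walk γ δ)
    (hP : (P₁.append (W₁.append P₂)).IsPath) (hW₂ : W₂.IsPath)
    (hinv : ∀ x ∈ W₂.support, x ≠ γ → x ≠ δ → x ∉ (P₁.append (W₁.append P₂)).support)
    (hv : v ∈ W₁.support) (hvγ : v ≠ γ) (hvδ : v ≠ δ)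
    (hsum : W₁.length + W₂.length ≤ n + 1)
    (hadj : G.Adj c c') (hc1 : c ∈ W₁.support) (hcn2 : c ∉ W₂.support)
    (hc'2 : c' ∈ W₂.support) (hc'n1 : c' ∉ W₁.support)
    (hcv : c ≠ v) :
    v ∈ forcedSet G s t := by
  have hW₁ : W₁.IsPath := (hP.of_append_right).of_append_left
  have hcγ : c ≠ γ := fun h => hcn2 (h ▸ W₂.start_mem_support)
  have hcδ : c ≠ δ := fun h => hcn2 (h ▸ W₂.end_mem_support)
  have hc'γ : c' ≠ γ := fun h => hc'n1 (h ▸ W₁.start_mem_support)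
  have hc'δ : c' ≠ δ := fun h => hc'n1 (h ▸ W₁.end_mem_support)
  have hl1 : (W₁.takeUntil c hc1).length + (W₁.dropUntil c hc1).length = W₁.length :=
    take_add_drop_length W₁ hc1
  have hl2 : (W₂.takeUntil c' hc'2).length + (W₂.dropUntil c' hc'2).length = W₂.length :=
    take_add_drop_length W₂ hc'2
  rcases mem_take_or_drop W₁ hc1 hv with hvtake | hvdrop
  · -- v before c : new instance with δ† = c
    have hGE : P₁.append ((W₁.takeUntil c hc1).append ((W₁.dropUntil c hc1).append P₂))
        = P₁.append (W₁.append P₂) := by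
      congr 1
      rw [Walk.append_assoc (W₁.takeUntil c hc1) (W₁.dropUntil c hc1) P₂, W₁.take_spec hc1]
    have hP' : (P₁.append ((W₁.takeUntil c hc1).append
        ((W₁.dropUntil c hc1).append P₂))).IsPath := by
      rw [hGE]
      exact hP
    have hW₂' : ((W₂.takeUntil c' hc'2).append
        (Walk.cons hadj.symm Walk.nil) : G.Walk γ c).IsPath := by
      rw [Walk.isPath_def, Walk.support_append, Walk.support_cons, Walk.support_nil,
        List.tail_cons]
      rw [List.nodup_append']
      refine ⟨(hW₂.takeUntil hc'2).support_nodup, List.nodup_singleton _, ?_⟩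
      intro z hz hz'
      rcases List.mem_singleton.1 hz' with rfl
      exact hcn2 (W₂.support_takeUntil_subset hc'2 hz)
    refine ihn s t γ c v P₁ (W₁.takeUntil c hc1) ((W₁.dropUntil c hc1).append P₂)
      ((W₂.takeUntil c' hc'2).append (Walk.cons hadj.symm Walk.nil)) hP' hW₂' ?_ hvtake hvγ hcv.symm ?_
    · intro x hx h1 h2
      rw [Walk.mem_support_append_iff, Walk.support_cons, Walk.support_nil] at hx
      have hxT : x ∈ (W₂.takeUntil c' hc'2).support := by
        rcases hx with h | h
        · exact h
        · rcases List.mem_cons.1 h with rfl | h'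
          · exact Walk.end_mem_support _
          · rcases List.mem_singleton.1 h' with rfl
            exact absurd rfl h2
      have hxδ : x ≠ δ := by
        intro h
        subst h
        exact end_not_mem_take hW₂ hc'2 hc'δ hxT
      have := hinv x (W₂.support_takeUntil_subset hc'2 hxT) h1 hxδ
      rw [← hGE] at this
      exact this
    · rw [Walk.length_append, Walk.length_cons, Walk.length_nil]
      have hd1 : 1 ≤ (W₁.dropUntil c hc1).length := drop_length_pos hc1 hcδ
      have hd2 : 1 ≤ (W₂.dropUntil c' hc'2).length := drop_length_pos hc'2 hc'δ
      omega
  · -- v after c : new instance with γ† = c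
    have hGE : (P₁.append (W₁.takeUntil c hc1)).append ((W₁.dropUntil c hc1).append P₂)
        = P₁.append (W₁.append P₂) := by
      rw [← Walk.append_assoc P₁ (W₁.takeUntil c hc1) _,
        Walk.append_assoc (W₁.takeUntil c hc1) (W₁.dropUntil c hc1) P₂, W₁.take_spec hc1]
    have hP' : ((P₁.append (W₁.takeUntil c hc1)).append
        ((W₁.dropUntil c hc1).append P₂)).IsPath := by
      rw [hGE]
      exact hP
    have hW₂' : (Walk.cons hadj (W₂.dropUntil c' hc'2) : G.Walk c δ).IsPath := by
      rw [Walk.cons_isPath_iff]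
      exact ⟨hW₂.dropUntil hc'2, fun h => hcn2 (W₂.support_dropUntil_subset hc'2 h)⟩
    refine ihn s t c δ v (P₁.append (W₁.takeUntil c hc1)) (W₁.dropUntil c hc1) P₂
      (Walk.cons hadj (W₂.dropUntil c' hc'2)) hP' hW₂' ?_ hvdrop hcv.symm hvδ ?_
    · intro x hx h1 h2
      rw [Walk.support_cons] at hx
      rcases List.mem_cons.1 hx with rfl | hx'
      · exact absurd rfl h1
      · have hxγ : x ≠ γ := by
          intro h
          subst h
          exact start_not_mem_drop hW₂ hc'2 hc'γ hx'
        have := hinv x (W₂.support_dropUntil_subset hc'2 hx') hxγ h2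
        rw [← hGE] at this
        exact this
    · rw [Walk.length_cons]
      have ht1 : 1 ≤ (W₁.takeUntil c hc1).length := take_length_pos hc1 hcγ
      have ht2 : 1 ≤ (W₂.takeUntil c' hc'2).length := take_length_pos hc'2 hc'γ
      omega

lemma caseV (ihn : DIH G n) (P₁ : G.Walk s γ) (W₁ : G.Walk γ δ) (P₂ : G.Walk δ t) (W₂ : G.Walk γ δ)
    (hP : (P₁.append (W₁.append P₂)).IsPath) (hW₂ : W₂.IsPath)
    (hinv : ∀ x ∈ W₂.support, x ≠ γ → x ≠ δ → x ∉ (P₁.append (W₁.append P₂)).support)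
    (hv : v ∈ W₁.support) (hvγ : v ≠ γ) (hvδ : v ≠ δ)
    (hsum : W₁.length + W₂.length ≤ n + 1)
    (hadj : G.Adj v c') (hc'2 : c' ∈ W₂.support) (hc'n1 : c' ∉ W₁.support) :
    v ∈ forcedSet G s t := by
  have hW₁ : W₁.IsPath := (hP.of_append_right).of_append_left
  have hc'γ : c' ≠ γ := fun h => hc'n1 (h ▸ W₁.start_mem_support)
  have hc'δ : c' ≠ δ := fun h => hc'n1 (h ▸ W₁.end_mem_support)
  have hvc' : v ≠ c' := fun h => hc'n1 (h ▸ hv)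
  have hD₁sub : ∀ z ∈ (W₁.dropUntil v hv).support, z ∈ W₁.support.tail := by
    intro z hz
    refine mem_support_tail_of_ne_start (W₁.support_dropUntil_subset hv hz) ?_
    intro h
    subst h
    exact start_not_mem_drop hW₁ hv hvγ hz
  have hT₂P : ∀ z ∈ (W₂.takeUntil c' hc'2).support.tail,
      z ∉ (P₁.append (W₁.append P₂)).support := by
    intro z hz
    have hzW₂ : z ∈ W₂.support :=
      W₂.support_takeUntil_subset hc'2 ((List.tail_sublist _).subset hz)
    have hzγ : z ≠ γ := by
      intro h
      subst h
      have := (hW₂.takeUntil hc'2).support_nodup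
      rw [(W₂.takeUntil c' hc'2).support_eq_cons, List.nodup_cons] at this
      exact this.1 hz
    have hzδ : z ≠ δ := by
      intro h
      subst h
      exact end_not_mem_take hW₂ hc'2 hc'δ ((List.tail_sublist _).subset hz)
    exact hinv z hzW₂ hzγ hzδ
  have hPn := hP
  rw [Walk.isPath_def, triple_support] at hPn
  rcases List.nodup_append'.1 hPn with ⟨hP₁n, hrest, hdisj1⟩
  rcases List.nodup_append'.1 hrest with ⟨hW₁tn, hP₂tn, hdisj2⟩
  have hP' : ((P₁.append (W₂.takeUntil c' hc'2)).append
      ((Walk.cons hadj.symm (W₁.dropUntil v hv)).append P₂)).IsPath := by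
    rw [Walk.isPath_def, triple_support, Walk.support_append, Walk.support_cons,
      List.tail_cons]
    rw [List.nodup_append']
    refine ⟨?_, ?_, ?_⟩
    · rw [List.nodup_append']
      refine ⟨hP₁n, (List.tail_sublist _).nodup (hW₂.takeUntil hc'2).support_nodup, ?_⟩
      intro z hz hz'
      exact hT₂P z hz' (by rw [triple_support]; exact List.mem_append_left _ hz)
    · rw [List.nodup_append']
      refine ⟨(hW₁.dropUntil hv).support_nodup, hP₂tn, ?_⟩
      intro z hz hz'
      exact hdisj2 (hD₁sub z hz) hz'
    · intro z hz hz'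
      rcases List.mem_append.1 hz with h | h
      · rcases List.mem_append.1 hz' with h' | h'
        · exact hdisj1 h (List.mem_append_left _ (hD₁sub z h'))
        · exact hdisj1 h (List.mem_append_right _ h')
      · rcases List.mem_append.1 hz' with h' | h'
        · exact hT₂P z h (by
            rw [triple_support]
            exact List.mem_append_right _
              (List.mem_append_left _ (hD₁sub z h')))
        · exact hT₂P z h (by
            rw [triple_support]
            exact List.mem_append_right _ (List.mem_append_right _ h'))
  refine ihn s t c' δ v (P₁.append (W₂.takeUntil c' hc'2))
    (Walk.cons hadj.symm (W₁.dropUntil v hv)) P₂ (W₂.dropUntil c' hc'2)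
    hP' (hW₂.dropUntil hc'2) ?_ ?_ hvc' hvδ ?_
  · intro x hx h1 h2
    have hxγ : x ≠ γ := by
      intro h
      subst h
      exact start_not_mem_drop hW₂ hc'2 hc'γ hx
    have hxP : x ∉ (P₁.append (W₁.append P₂)).support :=
      hinv x (W₂.support_dropUntil_subset hc'2 hx) hxγ h2
    have hxT₂ : x ∉ (W₂.takeUntil c' hc'2).support :=
      fun h => h1 (eq_of_mem_take_mem_drop hW₂ hc'2 h hx)
    intro hmem
    rcases mem_triple.1 hmem with h | h | h
    · rcases (Walk.mem_support_append_iff _ _).1 h with h' | h'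
      · exact hxP (mem_triple.2 (Or.inl h'))
      · exact hxT₂ h'
    · rw [Walk.support_cons] at h
      rcases List.mem_cons.1 h with rfl | h'
      · exact h1 rfl
      · exact hxP (mem_triple.2 (Or.inr (Or.inl (W₁.support_dropUntil_subset hv h'))))
    · exact hxP (mem_triple.2 (Or.inr (Or.inr h)))
  · rw [Walk.support_cons]
    exact List.mem_cons_of_mem _ (Walk.start_mem_support _)
  · rw [Walk.length_cons]
    have hl1 : (W₁.takeUntil v hv).length + (W₁.dropUntil v hv).length = W₁.length :=
      take_add_drop_length W₁ hv
    have hl2 : (W₂.takeUntil c' hc'2).length + (W₂.dropUntil c' hc'2).length = W₂.length :=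
      take_add_drop_length W₂ hc'2
    have ht1 : 1 ≤ (W₁.takeUntil v hv).length := take_length_pos hv hvγ
    have ht2 : 1 ≤ (W₂.takeUntil c' hc'2).length := take_length_pos hc'2 hc'γ
    omega

lemma Dlem (hch : IsChordal G) : ∀ n, DIH G n := by
  intro n
  induction n with
  | zero =>
    intro s t γ δ v P₁ W₁ P₂ W₂ hP hW₂ hinv hv hvγ hvδ hsum
    have := mid_length hv hvγ hvδ
    omega
  | succ n ihn =>
    intro s t γ δ v P₁ W₁ P₂ W₂ hP hW₂ hinv hv hvγ hvδ hsum
    have hW₁ : W₁.IsPath := (hP.of_append_right).of_append_left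
    have hW₁len : 2 ≤ W₁.length := mid_length hv hvγ hvδ
    have hγδ : γ ≠ δ := path_end_ne hW₁ (by omega)
    have hW₂len : 1 ≤ W₂.length := by
      by_contra h
      push_neg at h
      have h0 : W₂.length = 0 := by omega
      exact hγδ (length_zero_eq h0)
    by_cases hbase : W₁.length = 2 ∧ W₂.length = 1
    · exact caseBase P₁ W₁ P₂ W₂ hP hW₂ hv hvγ hvδ hbase.1 hbase.2
    · have hdisj : ∀ z, z ∈ W₁.support → z ∈ W₂.support → z = γ ∨ z = δ := by
        intro z h1 h2
        by_contra h
        push_neg at h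
        exact hinv z h2 h.1 h.2 (mem_triple.2 (Or.inr (Or.inl h1)))
      have hcyc : (W₁.append W₂.reverse).IsCycle := cycle_of_lens hW₁ hW₂ hdisj hW₁len
      have hlen4 : 4 ≤ (W₁.append W₂.reverse).length := by
        rw [lens_length]
        omega
      obtain ⟨x, hx, y, hy, hadj, hne⟩ := hch γ (W₁.append W₂.reverse) hcyc hlen4
      rw [lens_support] at hx hy
      have hne1 : s(x,y) ∉ W₁.edges := fun h => hne (lens_edges.2 (Or.inl h))
      have hne2 : s(x,y) ∉ W₂.edges := fun h => hne (lens_edges.2 (Or.inr h))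
      by_cases h11 : x ∈ W₁.support ∧ y ∈ W₁.support
      · exact case1 ihn P₁ W₁ P₂ W₂ hP hW₂ hinv hv hvγ hvδ hsum hadj h11.1 h11.2 hne1 hne2
      by_cases h22 : x ∈ W₂.support ∧ y ∈ W₂.support
      · exact case2 ihn P₁ W₁ P₂ W₂ hP hW₂ hinv hv hvγ hvδ hsum hadj h22.1 h22.2 hne2
      have hmix : (x ∈ W₁.support ∧ x ∉ W₂.support ∧ y ∈ W₂.support ∧ y ∉ W₁.support)
          ∨ (y ∈ W₁.support ∧ y ∉ W₂.support ∧ x ∈ W₂.support ∧ x ∉ W₁.support) := by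
        tauto
      rcases hmix with ⟨ha, hb, hcm, hd⟩ | ⟨ha, hb, hcm, hd⟩
      · by_cases hxv : x = v
        · subst hxv
          exact caseV ihn P₁ W₁ P₂ W₂ hP hW₂ hinv hv hvγ hvδ hsum hadj hcm hd
        · exact caseCross ihn P₁ W₁ P₂ W₂ hP hW₂ hinv hv hvγ hvδ hsum hadj ha hb hcm hd hxv
      · by_cases hyv : y = v
        · subst hyv
          exact caseV ihn P₁ W₁ P₂ W₂ hP hW₂ hinv hv hvγ hvδ hsum hadj.symm hcm hd
        · exact caseCross ihn P₁ W₁ P₂ W₂ hP hW₂ hinv hv hvγ hvδ hsum hadj.symm ha hb hcm hd hyv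

end Dlem

section Find
variable {V : Type} [DecidableEq V] {G : SimpleGraph V} {s t v : V}

lemma firstHit {p : G.Walk s t} :
    ∀ {a : V} (r₀ : G.Walk a t), a ∉ p.support →
    ∃ (b : V) (W : G.Walk a b) (R : G.Walk b t), W.append R = r₀ ∧ b ∈ p.support ∧
      (∀ x ∈ W.support, x ≠ b → x ∉ p.support) := by
  intro a r₀
  induction r₀ with
  | nil => exact fun ha => absurd p.end_mem_support ha
  | cons h r₁ ih =>
    rename_i u w' _
    intro ha
    by_cases hw' : w' ∈ p.support
    · refine ⟨w', Walk.cons h Walk.nil, r₁, by simp, hw', ?_⟩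
      intro x hx h1
      rw [Walk.support_cons, Walk.support_nil] at hx
      rcases List.mem_cons.1 hx with rfl | hx'
      · exact ha
      · rcases List.mem_singleton.1 hx' with rfl
        exact absurd rfl h1
    · obtain ⟨b, W, R, heq, hb, hcond⟩ := ih hw'
      refine ⟨b, Walk.cons h W, R, by rw [Walk.cons_append, heq], hb, ?_⟩
      intro x hx h1
      rw [Walk.support_cons] at hx
      rcases List.mem_cons.1 hx with rfl | hx'
      · exact ha
      · exact hcond x hx' h1

lemma findLens {p : G.Walk s t} (hp : p.IsPath) :
    ∀ (n : ℕ) {w : V} (r' : G.Walk w t), r'.length ≤ n → r'.IsPath →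
    (∀ x ∈ r'.support, x ≠ v) → w ∈ p.support → [w, v] <+ p.support →
    ∃ (γ δ : V) (W₂ : G.Walk γ δ), W₂.IsPath ∧
      [γ, v] <+ p.support ∧ [v, δ] <+ p.support ∧
      (∀ x ∈ W₂.support, x ≠ γ → x ≠ δ → x ∉ p.support) := by
  have himp : ∀ {w : V}, [w, v] <+ p.support → w ≠ t := by
    intro w hpair h
    subst h
    obtain ⟨hx, hmem, hne⟩ := mem_drop_of_pair hp hpair
    have hnil : p.dropUntil w hx = Walk.nil := path_loop_nil (hp.dropUntil hx)
    rw [hnil] at hmem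
    rw [Walk.support_nil] at hmem
    exact hne (List.mem_singleton.1 hmem)
  intro n
  induction n with
  | zero =>
    intro w r' hlen hr' hvr hw hpair
    exfalso
    exact himp hpair (length_zero_eq (p := r') (by omega))
  | succ n ih =>
    intro w r' hlen hr' hvr hw hpair
    have hvp : v ∈ p.support := hpair.subset (by simp)
    cases r' with
    | nil => exact absurd rfl (himp hpair)
    | cons h r₁ =>
      rename_i w'
      rw [Walk.length_cons] at hlen
      have hr₁ : r₁.IsPath := ((Walk.cons_isPath_iff _ _).1 hr').1
      by_cases hw' : w' ∈ p.support
      · have hvw' : w' ≠ v := hvr w' (by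
          rw [Walk.support_cons]
          exact List.mem_cons_of_mem _ r₁.start_mem_support)
        rcases pair_total hw' hvp hvw' with hlt | hgt
        · refine ih r₁ (by omega) hr₁ ?_ hw' hlt
          intro x hx
          exact hvr x (by rw [Walk.support_cons]; exact List.mem_cons_of_mem _ hx)
        · refine ⟨w, w', Walk.cons h Walk.nil, ?_, hpair, hgt, ?_⟩
          · rw [Walk.cons_isPath_iff]
            refine ⟨Walk.IsPath.nil, ?_⟩
            rw [Walk.support_nil]
            simp [h.ne]
          · intro x hx h1 h2
            rw [Walk.support_cons, Walk.support_nil] at hx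
            rcases List.mem_cons.1 hx with rfl | hx'
            · exact absurd rfl h1
            · rcases List.mem_singleton.1 hx' with rfl
              exact absurd rfl h2
      · obtain ⟨b, W, R, heq, hb, hcond⟩ := firstHit r₁ hw'
        have hconsWR : (Walk.cons h (W.append R)).IsPath := by
          rw [heq]
          exact hr'
        have hWR : ((Walk.cons h W).append R).IsPath := by
          rw [Walk.cons_append]
          exact hconsWR
        have hbr : b ∈ r₁.support := by
          rw [← heq]
          rw [Walk.mem_support_append_iff]
          exact Or.inl W.end_mem_support
        have hbv : b ≠ v := hvr b (by
          rw [Walk.support_cons]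
          exact List.mem_cons_of_mem _ hbr)
        rcases pair_total hb hvp hbv with hlt | hgt
        · have hWlen : 1 ≤ W.length := by
            by_contra hcon
            push_neg at hcon
            have h0 : W.length = 0 := by omega
            exact hw' ((length_zero_eq h0) ▸ hb)
          have hRlen : W.length + R.length = r₁.length := by
            have := congrArg Walk.length heq
            rwa [Walk.length_append] at this
          refine ih R (by omega) (hWR.of_append_right) ?_ hb hlt
          intro x hx
          refine hvr x ?_
          rw [Walk.support_cons]
          refine List.mem_cons_of_mem _ ?_
          rw [← heq]
          rw [Walk.mem_support_append_iff]
          exact Or.inr hx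
        · refine ⟨w, b, Walk.cons h W, hWR.of_append_left, hpair, hgt, ?_⟩
          intro x hx h1 h2
          rw [Walk.support_cons] at hx
          rcases List.mem_cons.1 hx with rfl | hx'
          · exact absurd rfl h1
          · exact hcond x hx' h2

lemma claimC (hch : IsChordal G) {p r : G.Walk s t} (hp : p.IsPath) (hr : r.IsPath)
    (hvp : v ∈ p.support) (hvr : v ∉ r.support) : v ∈ forcedSet G s t := by
  have hvs : v ≠ s := fun h => hvr (h ▸ r.start_mem_support)
  have hsv : [s, v] <+ p.support := by
    rw [p.support_eq_cons]
    exact List.cons_sublist_cons.mpr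
      (List.singleton_sublist.mpr (mem_support_tail_of_ne_start hvp hvs))
  obtain ⟨γ, δ, W₂, hW₂, hγv, hvδ, hcond⟩ :=
    findLens hp r.length r (le_refl _) hr (fun x hx h => hvr (by rw [← h]; exact hx)) p.start_mem_support hsv
  obtain ⟨hγ, hvdrop, hvγ⟩ := mem_drop_of_pair hp hγv
  have hγδpair : [γ, δ] <+ p.support := pair_trans hp.support_nodup hγv hvδ
  obtain ⟨hγ2, hδdrop, hδγ⟩ := mem_drop_of_pair hp hγδpair
  have hδdrop' : δ ∈ (p.dropUntil γ hγ).support := hδdrop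
  have hvδ' : v ≠ δ := pair_ne hp.support_nodup hvδ
  have hvtake : v ∈ ((p.dropUntil γ hγ).takeUntil δ hδdrop').support := by
    rcases mem_take_or_drop (p.dropUntil γ hγ) hδdrop' hvdrop with hmem | hmem
    · exact hmem
    · exfalso
      have hpair2 : [δ, v] <+ (p.dropUntil γ hγ).support :=
        pair_of_mem_drop hδdrop' hmem hvδ'
      have h1 : [δ, v] <+ (p.dropUntil γ hγ).support.tail := by
        have hc := (p.dropUntil γ hγ).support_eq_cons
        rw [hc] at hpair2
        exact pair_descend hpair2 hδγ
      have hlift : [δ, v] <+ p.support := by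
        refine h1.trans ?_
        rw [support_split p hγ]
        exact List.sublist_append_right _ _
      exact pair_asymm hp.support_nodup hlift hvδ
  have hGE : (p.takeUntil γ hγ).append
      (((p.dropUntil γ hγ).takeUntil δ hδdrop').append
        ((p.dropUntil γ hγ).dropUntil δ hδdrop')) = p := by
    rw [(p.dropUntil γ hγ).take_spec hδdrop', p.take_spec hγ]
  have hP : ((p.takeUntil γ hγ).append
      (((p.dropUntil γ hγ).takeUntil δ hδdrop').append
        ((p.dropUntil γ hγ).dropUntil δ hδdrop'))).IsPath := by
    rw [hGE]
    exact hp
  refine Dlem hch (((p.dropUntil γ hγ).takeUntil δ hδdrop').length + W₂.length) s t γ δ v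
    (p.takeUntil γ hγ) ((p.dropUntil γ hγ).takeUntil δ hδdrop')
    ((p.dropUntil γ hγ).dropUntil δ hδdrop') W₂
    hP hW₂ ?_ hvtake hvγ hvδ' (le_refl _)
  intro x hx h1 h2
  intro hmem
  refine hcond x hx h1 h2 ?_
  rw [← hGE]
  exact hmem

end Find

section Main
variable {V : Type} [DecidableEq V] {G : SimpleGraph V} {s t : V}

theorem main_track (hch : IsChordal G) (hred : Reduced G s t) :
    IsTrackingSet G s t (forcedSet G s t) := by
  intro p q hp hq heq
  have dich : ∀ v : V, v ∈ forcedSet G s t ∨ ∀ (r : G.Walk s t), r.IsPath → v ∈ r.support := by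
    intro v
    by_cases hob : ∀ (r : G.Walk s t), r.IsPath → v ∈ r.support
    · exact Or.inr hob
    · push_neg at hob
      obtain ⟨r, hr, hvr⟩ := hob
      obtain ⟨p₀, hp₀, hv₀⟩ := hred.1 v
      exact Or.inl (claimC hch hp₀ hr hv₀ hvr)
  have hmemT : ∀ x, x ∈ forcedSet G s t → (x ∈ p.support ↔ x ∈ q.support) := by
    intro x hxT
    constructor
    · intro h
      have hm : x ∈ trackSeq (forcedSet G s t) p.support := mem_trackSeq.2 ⟨h, hxT⟩
      rw [heq] at hm
      exact (mem_trackSeq.1 hm).1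
    · intro h
      have hm : x ∈ trackSeq (forcedSet G s t) q.support := mem_trackSeq.2 ⟨h, hxT⟩
      rw [← heq] at hm
      exact (mem_trackSeq.1 hm).1
  have hmem : ∀ x, x ∈ p.support ↔ x ∈ q.support := by
    intro x
    rcases dich x with hxT | hob
    · exact hmemT x hxT
    · exact ⟨fun _ => hob q hq, fun _ => hob p hp⟩
  have hord : ∀ x y, [x,y] <+ p.support → [x,y] <+ q.support := by
    intro x y hxy
    have hne : x ≠ y := pair_ne hp.support_nodup hxy
    have hxq : x ∈ q.support := (hmem x).1 (hxy.subset (by simp))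
    have hyq : y ∈ q.support := (hmem y).1 (hxy.subset (by simp))
    have hyp' : y ∈ p.support := hxy.subset (by simp)
    rcases pair_total hxq hyq hne with hgood | h
    · exact hgood
    · exfalso
      rcases dich x with hxT | hobx
      · rcases dich y with hyT | hoby
        · have h1 : [x,y] <+ trackSeq (forcedSet G s t) p.support :=
            pair_trackSeq hxy hxT hyT
          have h2 : [y,x] <+ trackSeq (forcedSet G s t) q.support :=
            pair_trackSeq h hyT hxT
          rw [heq] at h1
          exact pair_asymm (trackSeq_nodup hq.support_nodup) h1 h2
        · -- y obligatory; avoid y with p.takeUntil x ++ q.dropUntil x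
          obtain ⟨hxp', hydrop, -⟩ := mem_drop_of_pair hp hxy
          have h1 : y ∉ (p.takeUntil x hxp').support := by
            intro hm
            exact hne.symm (eq_of_mem_take_mem_drop hp hxp' hm hydrop)
          have h2 : y ∉ (q.dropUntil x hxq).support := by
            intro hm
            exact pair_asymm hq.support_nodup (pair_of_mem_drop hxq hm hne.symm) h
          have hy : y ∉ ((p.takeUntil x hxp').append (q.dropUntil x hxq)).support := by
            intro hm
            rcases (Walk.mem_support_append_iff _ _).1 hm with hm' | hm'
            · exact h1 hm'
            · exact h2 hm'
          exact hy (Walk.support_bypass_subset _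
            (hoby ((p.takeUntil x hxp').append (q.dropUntil x hxq)).bypass
              (Walk.bypass_isPath _)))
      · -- x obligatory; avoid x with q.takeUntil y ++ p.dropUntil y
        obtain ⟨hyq', hxdropq, -⟩ := mem_drop_of_pair hq h
        have h1 : x ∉ (q.takeUntil y hyq').support := by
          intro hm
          exact pair_asymm hq.support_nodup (pair_of_mem_take hyq' hm hne) h
        have h2 : x ∉ (p.dropUntil y hyp').support := by
          intro hm
          exact pair_asymm hp.support_nodup hxy (pair_of_mem_drop hyp' hm hne)
        have hx : x ∉ ((q.takeUntil y hyq').append (p.dropUntil y hyp')).support := by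
          intro hm
          rcases (Walk.mem_support_append_iff _ _).1 hm with hm' | hm'
          · exact h1 hm'
          · exact h2 hm'
        exact hx (Walk.support_bypass_subset _
          (hobx ((q.takeUntil y hyq').append (p.dropUntil y hyp')).bypass
            (Walk.bypass_isPath _)))
  have hsupp : p.support = q.support :=
    eq_of_mem_of_orders hp.support_nodup hq.support_nodup hmem hord
  exact walk_eq_of_support_eq p q hsupp

end Main
end TrackAux

theorem stmt3 {V : Type} [Fintype V] (G : SimpleGraph V) (s t : V)
    (hchordal : IsChordal G) (hred : Reduced G s t) :
    IsTrackingSet G s t (forcedSet G s t) := by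
  classical
  exact TrackAux.main_track hchordal hred
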